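/- arXiv:1311.4425 — 3 statements merged into one kernel-verified Lean document; each statement's English description precedes it below -/
import Mathlib

section
/- (Lifting lemma; core of the Reduction Theorem.) Let P be a process template, let G = (V, E, x) and G' = (V', E', x') be topologies, and let ḡ and ḡ' be k-tuples of pairwise distinct vertices of G and G' with labelings Λ and Λ'. Let s₀ … s_T be a finite run of P^G with holder itinerary h₀ … h_T, and let w₀ … w_M be a walk in G' from x' such that List.destutter (· ≠ ·) [Λ'(w₀), …, Λ'(w_M)] = List.destutter (· ≠ ·) [Λ(h₀), …, Λ(h_T)]. Then there exists a finite run s'₀ … s'_{T'} of P^{G'} such that List.destutter (· ≠ ·) of the ḡ'-projection trace of s'₀ … s'_{T'} equals List.destutter (· ≠ ·) of the ḡ-projection trace of s₀ … s_T. -/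
/-! Token-passing systems: process templates, topologies, the system `P^G`. -/

noncomputable def dst {α : Type} (l : List α) : List α :=
  @List.destutter α (· ≠ ·) (fun _ _ => Classical.dec _) l

/-- A topology: a finite nonempty directed graph with no self-loops. -/
structure Topo where
  V : Type
  fintypeV : Fintype V
  decEqV : DecidableEq V
  nonemptyV : Nonempty V
  E : V → V → Prop
  no_self_loops : ∀ v, ¬ E v v

attribute [instance] Topo.fintypeV Topo.decEqV Topo.nonemptyV

/-- Actions of a process: internal actions from `A = Σint`, plus `snd`, `rcv`. -/
inductive Act (A : Type) where
  | int : A → Act A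
  | snd : Act A
  | rcv : Act A

/-- A process template `P = (Q, δ, tok, ιt, ιn)`.  The field `alternation`
encodes that every infinite action-labeled path of `P` lies in
`(Σint* snd Σint* rcv)^ω ∪ (Σint* rcv Σint* snd)^ω`: every infinite path has
infinitely many non-internal actions, between any two `snd`s there is a `rcv`,
and between any two `rcv`s there is a `snd`. -/
structure ProcTemplate (A : Type) where
  Q : Type
  fintypeQ : Fintype Q
  decEqQ : DecidableEq Q
  tok : Q → Prop
  iotaT : Q
  iotaN : Q
  tok_iotaT : tok iotaT
  not_tok_iotaN : ¬ tok iotaN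
  δ : Q → Act A → Q → Prop
  snd_tok : ∀ {q q'}, δ q Act.snd q' → tok q ∧ ¬ tok q'
  rcv_tok : ∀ {q q'}, δ q Act.rcv q' → ¬ tok q ∧ tok q'
  int_tok : ∀ {q a q'}, δ q (Act.int a) q' → (tok q ↔ tok q')
  total : ∀ q, ∃ σ q', δ q σ q'
  alternation : ∀ (q : ℕ → Q) (a : ℕ → Act A),
    (∀ t, δ (q t) (a t) (q (t + 1))) →
      (∀ t, ∃ t', t ≤ t' ∧ (a t' = Act.snd ∨ a t' = Act.rcv)) ∧
      (∀ t₁ t₂, t₁ < t₂ → a t₁ = Act.snd → a t₂ = Act.snd →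
        ∃ t, t₁ < t ∧ t < t₂ ∧ a t = Act.rcv) ∧
      (∀ t₁ t₂, t₁ < t₂ → a t₁ = Act.rcv → a t₂ = Act.rcv →
        ∃ t, t₁ < t ∧ t < t₂ ∧ a t = Act.snd)

attribute [instance] ProcTemplate.fintypeQ ProcTemplate.decEqQ

/-- The initial global state of `P^G` with initial vertex `x`. -/
def gInit {A : Type} (P : ProcTemplate A) (G : Topo) (x : G.V) : G.V → P.Q :=
  fun v => if v = x then P.iotaT else P.iotaN

/-- Internal transitions of `P^G`: one process moves via an internal action. -/
def IntTrans {A : Type} (P : ProcTemplate A) (G : Topo) (s s' : G.V → P.Q) : Prop :=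
  ∃ v a, P.δ (s v) (Act.int a) (s' v) ∧ ∀ w, w ≠ v → s' w = s w

/-- Token-passing transitions of `P^G`: a process sends the token to another
along an edge of `G`. -/
def TokTrans {A : Type} (P : ProcTemplate A) (G : Topo) (s s' : G.V → P.Q) : Prop :=
  ∃ v w, G.E v w ∧ P.δ (s v) Act.snd (s' v) ∧ P.δ (s w) Act.rcv (s' w) ∧
    ∀ u, u ≠ v → u ≠ w → s' u = s u

/-- Global transitions of `P^G`. -/
def GStep {A : Type} (P : ProcTemplate A) (G : Topo) (s s' : G.V → P.Q) : Prop :=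
  IntTrans P G s s' ∨ TokTrans P G s s'

/-- A finite run of `P^G` (as a nonempty list of global states starting at the
initial state, consecutive states related by transitions). -/
def IsFinRun {A : Type} (P : ProcTemplate A) (G : Topo) (x : G.V)
    (ρ : List (G.V → P.Q)) : Prop :=
  ρ ≠ [] ∧ ρ.head? = some (gInit P G x) ∧ List.Chain' (GStep P G) ρ

/-- A walk in `G` from `x`: a nonempty list of vertices starting at `x` with an
edge between consecutive entries. -/
def IsWalkFrom (G : Topo) (x : G.V) (w : List G.V) : Prop :=
  w ≠ [] ∧ w.head? = some x ∧ List.Chain' G.E w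

/-- The labeling `Λ` induced by a marked `k`-tuple `g`. -/
def lab {k : ℕ} (G : Topo) (g : Fin k → G.V) (v : G.V) : Finset (Fin k) :=
  Finset.univ.filter fun i => g i = v

/-- The `ḡ`-projection trace of a finite run: the list of `k`-tuples of local
states of the processes at the marked vertices. -/
def projTrace {A : Type} {k : ℕ} (P : ProcTemplate A) (G : Topo)
    (g : Fin k → G.V) (ρ : List (G.V → P.Q)) : List (Fin k → P.Q) :=
  ρ.map fun s i => s (g i)

section DstLemmas

open List

lemma dst_singleton {α : Type} (a : α) : dst [a] = [a] := by
  rfl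

lemma dst_cons_cons_eq {α : Type} {a b : α} (h : a = b) (l : List α) :
    dst (a :: b :: l) = dst (b :: l) := by
  subst h
  unfold dst
  rw [List.destutter_cons_cons, if_neg (by simp), List.destutter_cons']

lemma dst_cons_cons_ne {α : Type} {a b : α} (h : a ≠ b) (l : List α) :
    dst (a :: b :: l) = a :: dst (b :: l) := by
  unfold dst
  rw [List.destutter_cons_cons, if_pos h, List.destutter_cons']

lemma dst_cons_head' {α : Type} (a : α) (l : List α) : ∃ t, dst (a :: l) = a :: t := by
  induction l generalizing a with
  | nil => exact ⟨[], dst_singleton a⟩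
  | cons b m ih =>
    by_cases h : a = b
    · obtain ⟨t, ht⟩ := ih b
      exact ⟨t, by rw [dst_cons_cons_eq h, ht, h]⟩
    · exact ⟨dst (b :: m), dst_cons_cons_ne h m⟩

lemma dst_head? {α : Type} (a : α) (l : List α) : (dst (a :: l)).head? = some a := by
  obtain ⟨t, ht⟩ := dst_cons_head' a l
  rw [ht]; rfl

lemma dst_ne_nil {α : Type} (a : α) (l : List α) : dst (a :: l) ≠ [] := by
  obtain ⟨t, ht⟩ := dst_cons_head' a l
  rw [ht]; simp

lemma dst_congr_cons {α : Type} (a : α) {l₁ l₂ : List α}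
    (hh : l₁.head? = l₂.head?) (hd : dst l₁ = dst l₂) : dst (a :: l₁) = dst (a :: l₂) := by
  cases l₁ with
  | nil =>
    cases l₂ with
    | nil => rfl
    | cons c m₂ => simp at hh
  | cons b m₁ =>
    cases l₂ with
    | nil => simp at hh
    | cons c m₂ =>
      have hbc : b = c := by simpa using hh
      subst hbc
      by_cases h : a = b
      · rw [dst_cons_cons_eq h, dst_cons_cons_eq h]; exact hd
      · rw [dst_cons_cons_ne h, dst_cons_cons_ne h, hd]

lemma dst_cons_stutter {α : Type} {a : α} {m l : List α} (hm : ∀ b ∈ m, b = a) :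
    dst (a :: (m ++ l)) = dst (a :: l) := by
  induction m with
  | nil => rfl
  | cons b m' ih =>
    have hb : b = a := hm b (List.mem_cons_self)
    subst hb
    rw [List.cons_append, dst_cons_cons_eq rfl]
    exact ih fun c hc => hm c (List.mem_cons_of_mem _ hc)

end DstLemmas

section ChainLemmas

lemma chain'_glue {α : Type} {R : α → α → Prop} {l m : List α} {y : α}
    (h₁ : List.Chain' R l) (h₂ : l.getLast? = some y) (h₃ : List.Chain' R (y :: m)) :
    List.Chain' R (l ++ m) := by
  cases m with
  | nil => simpa using h₁
  | cons b t =>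
    refine List.IsChain.append h₁ h₃.tail ?_
    intro p hp q hq
    rw [h₂] at hp
    simp at hp hq
    subst hp; subst hq
    exact h₃.rel_head

lemma getLast?_glue {α : Type} {l m : List α} {y z : α}
    (h₁ : l.getLast? = some y) (h₂ : (y :: m).getLast? = some z) :
    (l ++ m).getLast? = some z := by
  cases m with
  | nil =>
    have : y = z := by simpa using h₂
    subst this
    simpa using h₁
  | cons b t =>
    rw [List.getLast?_append_of_ne_nil l (by simp : (b :: t : List α) ≠ [])]
    rw [List.getLast?_cons_cons] at h₂
    exact h₂

end ChainLemmas

section ProcLemmas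

/-- Internal reachability between local states. -/
def IntPath {A : Type} (P : ProcTemplate A) : P.Q → P.Q → Prop :=
  Relation.ReflTransGen (fun q q' => ∃ a, P.δ q (Act.int a) q')

lemma IntPath.tok_iff {A : Type} {P : ProcTemplate A} {q q' : P.Q} (h : IntPath P q q') :
    P.tok q ↔ P.tok q' := by
  induction h with
  | refl => exact Iff.rfl
  | tail _ hstep ih =>
    obtain ⟨a, ha⟩ := hstep
    exact ih.trans (P.int_tok ha)

lemma exists_can {A : Type} (P : ProcTemplate A) (q : P.Q) :
    ∃ q₁ q₂ σ, IntPath P q q₁ ∧ (σ = Act.snd ∨ σ = Act.rcv) ∧ P.δ q₁ σ q₂ := by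
  classical
  have htot := P.total
  let nxt : P.Q → P.Q := fun p => (htot p).choose_spec.choose
  let act : P.Q → Act A := fun p => (htot p).choose
  have hstep : ∀ p, P.δ p (act p) (nxt p) := fun p => (htot p).choose_spec.choose_spec
  let f : ℕ → P.Q := fun n => nxt^[n] q
  have hfs : ∀ t, f (t + 1) = nxt (f t) := fun t => Function.iterate_succ_apply' nxt t q
  have hδ : ∀ t, P.δ (f t) ((fun t => act (f t)) t) (f (t + 1)) := fun t => by
    rw [hfs]; exact hstep (f t)
  obtain ⟨halt, -, -⟩ := P.alternation f (fun t => act (f t)) hδ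
  obtain ⟨t', -, ht'⟩ := halt 0
  have hex : ∃ n, act (f n) = Act.snd ∨ act (f n) = Act.rcv := ⟨t', ht'⟩
  have hN := Nat.find_spec hex
  have hpath : ∀ n, n ≤ Nat.find hex → IntPath P q (f n) := by
    intro n hn
    induction n with
    | zero => exact Relation.ReflTransGen.refl
    | succ m ihm =>
      have hmlt : m < Nat.find hex := Nat.lt_of_succ_le hn
      have hm : ¬(act (f m) = Act.snd ∨ act (f m) = Act.rcv) := Nat.find_min hex hmlt
      have hδm := hδ m
      cases hact : act (f m) with
      | int a =>
        refine (ihm (le_of_lt hmlt)).tail ⟨a, ?_⟩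
        rw [← hact]; exact hδm
      | snd => exact absurd (Or.inl hact) hm
      | rcv => exact absurd (Or.inr hact) hm
  exact ⟨f (Nat.find hex), f (Nat.find hex + 1), act (f (Nat.find hex)),
    hpath _ le_rfl, hN, hδ _⟩

lemma can_rcv {A : Type} (P : ProcTemplate A) {q : P.Q} (hq : ¬P.tok q) :
    ∃ q₁ q₂, IntPath P q q₁ ∧ P.δ q₁ Act.rcv q₂ := by
  obtain ⟨q₁, q₂, σ, hp, hσ, hδ⟩ := exists_can P q
  rcases hσ with h | h
  · subst h
    exact absurd (hp.tok_iff.mpr (P.snd_tok hδ).1) hq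
  · subst h
    exact ⟨q₁, q₂, hp, hδ⟩

lemma can_snd {A : Type} (P : ProcTemplate A) {q : P.Q} (hq : P.tok q) :
    ∃ q₁ q₂, IntPath P q q₁ ∧ P.δ q₁ Act.snd q₂ := by
  obtain ⟨q₁, q₂, σ, hp, hσ, hδ⟩ := exists_can P q
  rcases hσ with h | h
  · subst h
    exact ⟨q₁, q₂, hp, hδ⟩
  · subst h
    exact absurd (hp.tok_iff.mp hq) (P.rcv_tok hδ).1

end ProcLemmas

section LabLemmas

lemma lab_of_marked {k : ℕ} (G : Topo) (g : Fin k → G.V) (hg : Function.Injective g)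
    (i : Fin k) : lab G g (g i) = {i} := by
  ext j
  simp [lab, hg.eq_iff]

lemma lab_of_unmarked {k : ℕ} (G : Topo) (g : Fin k → G.V) {v : G.V}
    (hv : ∀ i, g i ≠ v) : lab G g v = ∅ := by
  ext j
  simp [lab, hv j]

lemma marked_of_lab_eq {k : ℕ} {G : Topo} {g : Fin k → G.V} {v : G.V} {i : Fin k}
    (h : lab G g v = {i}) : g i = v := by
  have : i ∈ lab G g v := h ▸ Finset.mem_singleton_self i
  simpa [lab] using this

end LabLemmas

section SegInt

lemma seg_int {A : Type} (P : ProcTemplate A) (G' : Topo) (v₀ : G'.V) (s' : G'.V → P.Q)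
    {q₁ : P.Q} (hpath : IntPath P (s' v₀) q₁) :
    ∃ seg : List (G'.V → P.Q),
      List.Chain' (GStep P G') (s' :: seg) ∧
      (s' :: seg).getLast? = some (Function.update s' v₀ q₁) ∧
      ∀ t ∈ seg, ∀ u, u ≠ v₀ → t u = s' u := by
  induction hpath with
  | refl =>
    exact ⟨[], List.isChain_singleton _, by simp [Function.update_eq_self], by simp⟩
  | @tail b c _ hstep ih =>
    obtain ⟨seg, hch, hlast, hstut⟩ := ih
    obtain ⟨a, ha⟩ := hstep
    have hstep' : GStep P G' (Function.update s' v₀ b) (Function.update s' v₀ c) := by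
      refine Or.inl ⟨v₀, a, ?_, ?_⟩
      · simpa using ha
      · intro w hw
        simp [Function.update_of_ne hw]
    refine ⟨seg ++ [Function.update s' v₀ c], ?_, ?_, ?_⟩
    · have := chain'_glue hch hlast (List.isChain_pair.mpr hstep')
      simpa using this
    · rw [show s' :: (seg ++ [Function.update s' v₀ c]) =
          (s' :: seg) ++ [Function.update s' v₀ c] by simp]
      exact List.getLast?_concat
    · intro t ht u hu
      rcases List.mem_append.mp ht with h | h
      · exact hstut t h u hu
      · simp at h
        subst h
        exact Function.update_of_ne hu _ _

end SegInt

section Route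

lemma route {A : Type} (P : ProcTemplate A) (G' : Topo) {k : ℕ}
    (g' : Fin k → G'.V) (hg' : Function.Injective g') (j : Fin k) (qr : P.Q) :
    ∀ (wr : List G'.V) (v' : G'.V) (s' : G'.V → P.Q) (M : List (Finset (Fin k))),
      List.Chain' G'.E (v' :: wr) → (∀ i, g' i ≠ v') →
      P.tok (s' v') → (∀ u, P.tok (s' u) → u = v') →
      P.δ (s' (g' j)) Act.rcv qr →
      dst ((v' :: wr).map (lab G' g')) = (∅ : Finset (Fin k)) :: M →
      M.head? = some {j} →
      ∃ (wr' : List G'.V) (seg : List (G'.V → P.Q)) (s'' : G'.V → P.Q),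
        List.Chain' G'.E (g' j :: wr') ∧
        dst ((g' j :: wr').map (lab G' g')) = M ∧
        List.Chain' (GStep P G') (s' :: seg ++ [s'']) ∧
        (∀ t ∈ seg, ∀ i, t (g' i) = s' (g' i)) ∧
        s'' (g' j) = qr ∧ (∀ i, i ≠ j → s'' (g' i) = s' (g' i)) ∧
        (∀ u, P.tok (s'' u) → u = g' j) := by
  intro wr
  induction wr with
  | nil =>
    intro v' s' M _ _ _ _ _ htar hM
    exfalso
    simp only [List.map_cons, List.map_nil] at htar
    rw [dst_singleton] at htar
    injection htar with _ h2
    rw [← h2] at hM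
    simp at hM
  | cons y wr₂ ih =>
    intro v' s' M hch hunm hv' huniq hrecv htar hM
    have hlabv' : lab G' g' v' = ∅ := lab_of_unmarked G' g' hunm
    have hEvy : G'.E v' y := hch.rel_head
    have hyv' : y ≠ v' := fun h => G'.no_self_loops v' (h ▸ hEvy)
    have hv'y : v' ≠ y := fun h => hyv' h.symm
    by_cases hmy : ∃ i, g' i = y
    · -- next walk vertex is marked: it must be g' j, do the final hop
      obtain ⟨i, hi⟩ := hmy
      have hlaby : lab G' g' y = {i} := hi ▸ lab_of_marked G' g' hg' i
      have hne : lab G' g' v' ≠ lab G' g' y := by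
        rw [hlabv', hlaby]; exact (Finset.singleton_ne_empty i).symm
      have htar2 : dst ((y :: wr₂).map (lab G' g')) = M := by
        have h2 := htar
        simp only [List.map_cons] at h2
        rw [dst_cons_cons_ne hne] at h2
        simp only [List.map_cons]
        exact (List.cons.injEq _ _ _ _ ▸ h2).2
      have hij : i = j := by
        have h1 : (dst ((y :: wr₂).map (lab G' g'))).head? = some (lab G' g' y) := by
          simp only [List.map_cons]; exact dst_head? _ _
        rw [htar2, hM, hlaby] at h1
        exact Finset.singleton_injective (Option.some.inj h1).symm
      subst hij
      obtain ⟨q₁, q₂, hp, hsn⟩ := can_snd P hv'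
      obtain ⟨seg₁, hch₁, hlast₁, hstut₁⟩ := seg_int P G' v' s' hp
      have hne1 : v' ≠ g' i := fun h => hunm i h.symm
      refine ⟨wr₂, seg₁,
        Function.update (Function.update (Function.update s' v' q₁) v' q₂) (g' i) qr,
        ?_, ?_, ?_, ?_, ?_, ?_, ?_⟩
      · rw [hi]; exact hch.tail
      · rw [hi]; exact htar2
      · have hstep' : GStep P G' (Function.update s' v' q₁)
            (Function.update (Function.update (Function.update s' v' q₁) v' q₂) (g' i) qr) := by
          refine Or.inr ⟨v', g' i, hi ▸ hEvy, ?_, ?_, ?_⟩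
          · simpa [Function.update_apply, hne1] using hsn
          · simpa [Function.update_apply, hunm i, hne1] using hrecv
          · intro u hu1 hu2
            simp [Function.update_apply, hu1, hu2]
        have := chain'_glue hch₁ hlast₁ (List.isChain_pair.mpr hstep')
        simpa using this
      · intro t ht l
        exact hstut₁ t ht (g' l) (hunm l)
      · exact Function.update_self _ _ _
      · intro l hl
        have h1 : g' l ≠ g' i := fun h => hl (hg' h)
        simp [Function.update_apply, h1, hunm l]
      · intro u htok
        by_cases huj : u = g' i
        · exact huj
        · exfalso
          by_cases huv : u = v'
          · subst huv
            rw [Function.update_of_ne huj, Function.update_self] at htok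
            exact (P.snd_tok hsn).2 htok
          · rw [Function.update_of_ne huj, Function.update_of_ne huv,
              Function.update_of_ne huv] at htok
            exact huv (huniq u htok)
    · -- next walk vertex is unmarked: hop and recurse
      have hyunm : ∀ l, g' l ≠ y := fun l h => hmy ⟨l, h⟩
      have hlaby : lab G' g' y = ∅ := lab_of_unmarked G' g' hyunm
      have htar2 : dst ((y :: wr₂).map (lab G' g')) = (∅ : Finset (Fin k)) :: M := by
        have h2 := htar
        simp only [List.map_cons] at h2 ⊢
        rw [hlabv', hlaby] at h2
        rw [hlaby]
        rw [dst_cons_cons_eq rfl] at h2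
        exact h2
      obtain ⟨q₁, q₂, hps, hsn⟩ := can_snd P hv'
      obtain ⟨r₁, r₂, hpr, hrc⟩ := can_rcv P (show ¬P.tok (s' y) from fun ht => hyv' (huniq y ht))
      obtain ⟨seg₁, hch₁, hlast₁, hstut₁⟩ := seg_int P G' v' s' hps
      set sm := Function.update s' v' q₁ with hsmdef
      have hsmy : sm y = s' y := Function.update_of_ne hyv' _ _
      obtain ⟨seg₂, hch₂, hlast₂, hstut₂⟩ := seg_int P G' y sm (hsmy ▸ hpr)
      set sm₂ := Function.update sm y r₁ with hsm₂def
      set s₃ := Function.update (Function.update sm₂ v' q₂) y r₂ with hs₃def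
      have hstep' : GStep P G' sm₂ s₃ := by
        refine Or.inr ⟨v', y, hEvy, ?_, ?_, ?_⟩
        · simp only [hs₃def, hsm₂def, hsmdef, Function.update_apply, if_pos rfl]
          simpa [Function.update_apply, hv'y] using hsn
        · simp only [hs₃def, hsm₂def, Function.update_apply, if_pos rfl]
          simpa using hrc
        · intro u hu1 hu2
          simp [hs₃def, hsm₂def, Function.update_apply, hu1, hu2]
      have h3marked : ∀ l, s₃ (g' l) = s' (g' l) := by
        intro l
        simp [hs₃def, hsm₂def, hsmdef, Function.update_apply, hyunm l, hunm l]
      have h3tok : P.tok (s₃ y) := by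
        rw [hs₃def, Function.update_self]
        exact (P.rcv_tok hrc).2
      have h3uniq : ∀ u, P.tok (s₃ u) → u = y := by
        intro u htok
        by_cases huy : u = y
        · exact huy
        · exfalso
          rw [hs₃def, Function.update_of_ne huy] at htok
          by_cases huv : u = v'
          · subst huv
            rw [Function.update_self] at htok
            exact (P.snd_tok hsn).2 htok
          · rw [Function.update_of_ne huv, hsm₂def, Function.update_of_ne huy,
              hsmdef, Function.update_of_ne huv] at htok
            exact huv (huniq u htok)
      have h3recv : P.δ (s₃ (g' j)) Act.rcv qr := by rw [h3marked j]; exact hrecv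
      obtain ⟨wr', seg₃, s'', hcw, hdw, hch₃, hstut₃, h1, h2, h4⟩ :=
        ih y s₃ M hch.tail hyunm h3tok h3uniq h3recv htar2 hM
      refine ⟨wr', seg₁ ++ seg₂ ++ s₃ :: seg₃, s'', hcw, hdw, ?_, ?_, h1,
        fun l hl => (h2 l hl).trans (h3marked l), h4⟩
      · have glue12 : List.Chain' (GStep P G') ((s' :: seg₁) ++ seg₂) :=
          chain'_glue hch₁ hlast₁ hch₂
        have last12 : ((s' :: seg₁) ++ seg₂).getLast? = some sm₂ :=
          getLast?_glue hlast₁ (by rw [hsm₂def]; exact hlast₂)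
        have c₃ : List.Chain' (GStep P G') (sm₂ :: (s₃ :: seg₃ ++ [s''])) :=
          List.isChain_cons_cons.mpr ⟨hstep', hch₃⟩
        have := chain'_glue glue12 last12 c₃
        rw [show ((s' :: seg₁) ++ seg₂) ++ (s₃ :: seg₃ ++ [s'']) =
          s' :: (seg₁ ++ seg₂ ++ s₃ :: seg₃) ++ [s''] by simp] at this
        exact this
      · intro t ht l
        simp only [List.append_assoc, List.mem_append, List.mem_cons] at ht
        rcases ht with h | h | h | h
        · exact hstut₁ t h (g' l) (hunm l)
        · exact (hstut₂ t h (g' l) (hyunm l)).trans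
            (by rw [hsmdef, Function.update_of_ne (hunm l)])
        · rw [h]; exact h3marked l
        · exact (hstut₃ t h l).trans (h3marked l)

end Route

section Main

lemma main_sim {A : Type} (P : ProcTemplate A) (G G' : Topo) {k : ℕ}
    (g : Fin k → G.V) (hg : Function.Injective g)
    (g' : Fin k → G'.V) (hg' : Function.Injective g') :
    ∀ (tl : List (G.V → P.Q)) (htl : List G.V) (s : G.V → P.Q) (v : G.V)
      (s' : G'.V → P.Q) (v' : G'.V) (wr : List G'.V),
      List.Chain' (GStep P G) (s :: tl) →
      List.Forall₂ (fun st u => P.tok (st u)) tl htl →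
      P.tok (s v) → (∀ u, P.tok (s u) → u = v) →
      P.tok (s' v') → (∀ u, P.tok (s' u) → u = v') →
      (∀ i, s' (g' i) = s (g i)) →
      List.Chain' G'.E (v' :: wr) →
      dst ((v' :: wr).map (lab G' g')) = dst ((v :: htl).map (lab G g)) →
      ∃ ρ'' : List (G'.V → P.Q), List.Chain' (GStep P G') (s' :: ρ'') ∧
        dst (projTrace P G' g' (s' :: ρ'')) = dst (projTrace P G g (s :: tl)) := by
  intro tl
  induction tl with
  | nil =>
    intro htl s v s' v' wr _ hf _ _ _ _ hmarked _ _
    cases hf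
    refine ⟨[], List.isChain_singleton _, ?_⟩
    have : (fun i => s' (g' i)) = fun i => s (g i) := funext hmarked
    simp only [projTrace, List.map_cons, List.map_nil, this]
  | cons s₂ tl' ih =>
    intro htl s v s' v' wr hch hf hv huniq hv' huniqG' hmarked hwch hlabs
    cases hf with
    | @cons _ v₂ _ htl' hhd hf' =>
    have hstep0 : GStep P G s s₂ := hch.rel_head
    have hch' : List.Chain' (GStep P G) (s₂ :: tl') := hch.tail
    have hheadlab : lab G' g' v' = lab G g v := by
      have h1 : (dst ((v' :: wr).map (lab G' g'))).head? = some (lab G' g' v') := by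
        simp only [List.map_cons]; exact dst_head? _ _
      have h2 : (dst ((v :: v₂ :: htl').map (lab G g))).head? = some (lab G g v) := by
        simp only [List.map_cons]; exact dst_head? _ _
      rw [hlabs, h2] at h1
      exact (Option.some.inj h1).symm
    rcases hstep0 with ⟨u, a, hδ, hoth⟩ | ⟨u₁, u₂, hE, hsnd, hrcv, hoth⟩
    · -- internal transition
      have htok2 : ∀ w, P.tok (s₂ w) ↔ P.tok (s w) := by
        intro w
        by_cases hw : w = u
        · subst hw; exact (P.int_tok hδ).symm
        · rw [hoth w hw]
      have hv2 : P.tok (s₂ v) := (htok2 v).mpr hv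
      have huniq2 : ∀ w, P.tok (s₂ w) → w = v := fun w hw => huniq w ((htok2 w).mp hw)
      have hv₂v : v₂ = v := huniq2 v₂ hhd
      subst hv₂v
      have hlabs' : dst ((v' :: wr).map (lab G' g')) = dst ((v₂ :: htl').map (lab G g)) := by
        rw [hlabs]; simp only [List.map_cons]
        exact dst_cons_cons_eq rfl _
      by_cases hmu : ∃ i, g i = u
      · -- internal at a marked vertex: mirror it
        obtain ⟨i, hi⟩ := hmu
        have hδ' : P.δ (s' (g' i)) (Act.int a) (s₂ (g i)) := by
          rw [hmarked i, hi]
          exact hδ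
        have hstep' : GStep P G' s' (Function.update s' (g' i) (s₂ (g i))) :=
          Or.inl ⟨g' i, a, by simpa using hδ', fun w hw => Function.update_of_ne hw _ _⟩
        have hmarked' : ∀ l, Function.update s' (g' i) (s₂ (g i)) (g' l) = s₂ (g l) := by
          intro l
          by_cases hl : l = i
          · subst hl; simp
          · rw [Function.update_of_ne (fun hh => hl (hg' hh)), hmarked l,
              hoth (g l) (fun hh => hl (hg (hh.trans hi.symm)))]
      -- hoth needs g l ≠ u; g l = u = g i would give l = i
        have htok2' : ∀ w, P.tok (Function.update s' (g' i) (s₂ (g i)) w) ↔ P.tok (s' w) := by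
          intro w
          by_cases hw : w = g' i
          · subst hw
            rw [Function.update_self, hmarked i]
            have := htok2 (g i)
            rw [hi] at this ⊢
            exact this
          · rw [Function.update_of_ne hw]
        obtain ⟨ρ'', hchr, hdr⟩ := ih htl' s₂ v₂ (Function.update s' (g' i) (s₂ (g i))) v' wr
          hch' hf' hv2 huniq2 ((htok2' v').mpr hv') (fun w hw => huniqG' w ((htok2' w).mp hw))
          hmarked' hwch hlabs'
        refine ⟨Function.update s' (g' i) (s₂ (g i)) :: ρ'', List.isChain_cons_cons.mpr ⟨hstep', hchr⟩, ?_⟩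
        simp only [projTrace, List.map_cons] at hdr ⊢
        have ha : (fun l => s' (g' l)) = fun l => s (g l) := funext hmarked
        have hb : (fun l => Function.update s' (g' i) (s₂ (g i)) (g' l)) = fun l => s₂ (g l) :=
          funext hmarked'
        rw [ha]
        refine dst_congr_cons _ ?_ hdr
        simp [hb]
      · -- internal at an unmarked vertex: do nothing
        have hmarked2 : ∀ l, s' (g' l) = s₂ (g l) := fun l =>
          (hmarked l).trans (hoth (g l) (fun hh => hmu ⟨l, hh⟩)).symm
        obtain ⟨ρ'', hchr, hdr⟩ := ih htl' s₂ v₂ s' v' wr hch' hf' hv2 huniq2 hv' huniqG'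
          hmarked2 hwch hlabs'
        refine ⟨ρ'', hchr, ?_⟩
        have hpp : (fun l => s (g l)) = fun l => s₂ (g l) :=
          funext fun l => (hoth (g l) fun hh => hmu ⟨l, hh⟩).symm
        simp only [projTrace, List.map_cons] at hdr ⊢
        rw [hpp, dst_cons_cons_eq rfl]
        exact hdr
    · -- token-passing transition
      have hu₁ : u₁ = v := huniq u₁ (P.snd_tok hsnd).1
      subst hu₁
      have hvu₂ : u₁ ≠ u₂ := fun hh => G.no_self_loops u₂ (hh ▸ hE)
      have htoks₂ : P.tok (s₂ u₂) := (P.rcv_tok hrcv).2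
      have huniq2 : ∀ w, P.tok (s₂ w) → w = u₂ := by
        intro w hw
        by_cases hw2 : w = u₂
        · exact hw2
        · by_cases hw1 : w = u₁
          · subst hw1; exact absurd hw (P.snd_tok hsnd).2
          · rw [hoth w hw1 hw2] at hw
            exact absurd (huniq w hw) hw1
      have hv₂ : v₂ = u₂ := huniq2 v₂ hhd
      subst hv₂
      by_cases hlvu : lab G g v₂ = lab G g u₁
      · -- both endpoints unmarked: labels stutter, do nothing
        have hvunm : ∀ i, g i ≠ u₁ := by
          intro i hi
          have h1 : lab G g u₁ = {i} := hi ▸ lab_of_marked G g hg i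
          have h2 : g i = v₂ := marked_of_lab_eq (hlvu.trans h1)
          exact hvu₂ (hi ▸ h2 : u₁ = v₂)
        have hu₂unm : ∀ i, g i ≠ v₂ := by
          intro i hi
          have h1 : lab G g v₂ = {i} := hi ▸ lab_of_marked G g hg i
          have h2 : g i = u₁ := marked_of_lab_eq (hlvu.symm.trans h1)
          exact hvunm i h2
        have hmarked2 : ∀ l, s' (g' l) = s₂ (g l) := fun l =>
          (hmarked l).trans (hoth (g l) (hvunm l) (hu₂unm l)).symm
        have hlabs' : dst ((v' :: wr).map (lab G' g')) = dst ((v₂ :: htl').map (lab G g)) := by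
          rw [hlabs]; simp only [List.map_cons]
          exact dst_cons_cons_eq hlvu.symm _
        obtain ⟨ρ'', hchr, hdr⟩ := ih htl' s₂ v₂ s' v' wr hch' hf' htoks₂ huniq2 hv' huniqG'
          hmarked2 hwch hlabs'
        refine ⟨ρ'', hchr, ?_⟩
        have hpp : (fun l => s (g l)) = fun l => s₂ (g l) :=
          funext fun l => (hoth (g l) (hvunm l) (hu₂unm l)).symm
        simp only [projTrace, List.map_cons] at hdr ⊢
        rw [hpp, dst_cons_cons_eq rfl]
        exact hdr
      · -- label changes
        have hlab_ne : lab G g u₁ ≠ lab G g v₂ := fun hh => hlvu hh.symm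
        have hlabs2 : dst ((v' :: wr).map (lab G' g')) =
            lab G g u₁ :: dst ((v₂ :: htl').map (lab G g)) := by
          rw [hlabs]; simp only [List.map_cons]
          rw [dst_cons_cons_ne hlab_ne]
        cases wr with
        | nil =>
          exfalso
          have h2 := hlabs2
          simp only [List.map_cons, List.map_nil] at h2
          rw [dst_singleton] at h2
          have h3 := (List.cons.injEq _ _ _ _ ▸ h2).2
          exact dst_ne_nil _ _ h3.symm
        | cons y wr₂ =>
          have hEvy : G'.E v' y := hwch.rel_head
          have hyv' : y ≠ v' := fun hh => G'.no_self_loops v' (hh ▸ hEvy)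
          by_cases hmv : ∃ i, g i = u₁
          · -- sender marked in G: sender in G' is g' i, receiver is next walk vertex
            obtain ⟨i, hi⟩ := hmv
            have hlabv : lab G g u₁ = {i} := hi ▸ lab_of_marked G g hg i
            have hv'eq : v' = g' i :=
              (marked_of_lab_eq (hheadlab.trans hlabv)).symm
            have hlaby_ne : lab G' g' v' ≠ lab G' g' y := by
              intro hh
              have h1 : lab G' g' y = {i} := hh.symm.trans (hheadlab.trans hlabv)
              exact hyv' ((marked_of_lab_eq h1) ▸ hv'eq.symm ▸ rfl : y = v')
            have hlabs3 : dst ((y :: wr₂).map (lab G' g')) =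
                dst ((v₂ :: htl').map (lab G g)) := by
              have h2 := hlabs2
              simp only [List.map_cons] at h2
              rw [dst_cons_cons_ne (fun hh => hlaby_ne hh)] at h2
              exact (List.cons.injEq _ _ _ _ ▸ h2).2
            have hheady : lab G' g' y = lab G g v₂ := by
              have h1 : (dst ((y :: wr₂).map (lab G' g'))).head? = some (lab G' g' y) := by
                simp only [List.map_cons]; exact dst_head? _ _
              have h2 : (dst ((v₂ :: htl').map (lab G g))).head? = some (lab G g v₂) := by
                simp only [List.map_cons]; exact dst_head? _ _
              rw [hlabs3, h2] at h1
              exact (Option.some.inj h1).symm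
            have hδs : P.δ (s' (g' i)) Act.snd (s₂ (g i)) := by
              rw [hmarked i, hi]; exact hsnd
            by_cases hmu₂ : ∃ jj, g jj = v₂
            · -- receiver also marked: single mirrored token-passing step
              obtain ⟨j, hj⟩ := hmu₂
              have hlabu₂ : lab G g v₂ = {j} := hj ▸ lab_of_marked G g hg j
              have hyg : y = g' j := (marked_of_lab_eq (hheady.trans hlabu₂)).symm
              have hij : i ≠ j := fun hh => hvu₂ (by rw [← hi, ← hj, hh])
              have hgij : g' i ≠ g' j := fun hh => hij (hg' hh)
              have hδr : P.δ (s' (g' j)) Act.rcv (s₂ (g j)) := by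
                rw [hmarked j, hj]; exact hrcv
              set s₂' := Function.update (Function.update s' (g' i) (s₂ (g i))) (g' j) (s₂ (g j))
                with hs₂'def
              have hstep' : GStep P G' s' s₂' := by
                refine Or.inr ⟨g' i, g' j, ?_, ?_, ?_, ?_⟩
                · rw [← hv'eq, ← hyg]; exact hEvy
                · rw [hs₂'def, Function.update_of_ne hgij, Function.update_self]
                  exact hδs
                · rw [hs₂'def, Function.update_self]
                  exact hδr
                · intro w hw1 hw2
                  rw [hs₂'def, Function.update_of_ne hw2, Function.update_of_ne hw1]
              have hmarked' : ∀ l, s₂' (g' l) = s₂ (g l) := by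
                intro l
                by_cases hlj : l = j
                · subst hlj; rw [hs₂'def, Function.update_self]
                · rw [hs₂'def, Function.update_of_ne (fun hh => hlj (hg' hh))]
                  by_cases hli : l = i
                  · subst hli; rw [Function.update_self]
                  · rw [Function.update_of_ne (fun hh => hli (hg' hh)), hmarked l,
                      hoth (g l) (fun hh => hli (hg (hh.trans hi.symm)))
                        (fun hh => hlj (hg (hh.trans hj.symm)))]
              have htoks' : P.tok (s₂' (g' j)) := by
                rw [hmarked' j, hj]; exact htoks₂
              have huniqs' : ∀ w, P.tok (s₂' w) → w = g' j := by
                intro w hw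
                by_cases hwj : w = g' j
                · exact hwj
                · exfalso
                  rw [hs₂'def, Function.update_of_ne hwj] at hw
                  by_cases hwi : w = g' i
                  · subst hwi
                    rw [Function.update_self] at hw
                    have : P.tok (s₂ u₁) := by rw [← hi]; exact hw
                    exact (P.snd_tok hsnd).2 this
                  · rw [Function.update_of_ne hwi] at hw
                    exact hwi ((huniqG' w hw).trans hv'eq)
              obtain ⟨ρ'', hchr, hdr⟩ := ih htl' s₂ v₂ s₂' (g' j) wr₂ hch' hf' htoks₂ huniq2
                htoks' huniqs' hmarked' (by rw [← hyg]; exact hwch.tail) (by rw [← hyg]; exact hlabs3)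
              refine ⟨s₂' :: ρ'', List.isChain_cons_cons.mpr ⟨hstep', hchr⟩, ?_⟩
              simp only [projTrace, List.map_cons] at hdr ⊢
              have ha : (fun l => s' (g' l)) = fun l => s (g l) := funext hmarked
              have hb : (fun l => s₂' (g' l)) = fun l => s₂ (g l) := funext hmarked'
              rw [ha]
              refine dst_congr_cons _ ?_ hdr
              simp [hb]
            · -- receiver unmarked: prepare receiver with internal steps, then pass
              have hu₂unm : ∀ jj, g jj ≠ v₂ := fun jj hh => hmu₂ ⟨jj, hh⟩
              have hlabu₂ : lab G g v₂ = ∅ := lab_of_unmarked G g hu₂unm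
              have hyunm : ∀ l, g' l ≠ y := by
                intro l hl
                have h1 : lab G' g' y = {l} := hl ▸ lab_of_marked G' g' hg' l
                rw [hheady, hlabu₂] at h1
                exact Finset.singleton_ne_empty l h1.symm
              have hytok : ¬P.tok (s' y) := fun ht => hyv' (huniqG' y ht)
              obtain ⟨r₁, r₂, hpr, hrc⟩ := can_rcv P hytok
              obtain ⟨seg₁, hch₁, hlast₁, hstut₁⟩ := seg_int P G' y s' hpr
              have hgiy : g' i ≠ y := hyunm i
              set sm := Function.update s' y r₁ with hsmdef
              set s₂' := Function.update (Function.update sm (g' i) (s₂ (g i))) y r₂ with hs₂'def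
              have hstep' : GStep P G' sm s₂' := by
                refine Or.inr ⟨g' i, y, ?_, ?_, ?_, ?_⟩
                · rw [← hv'eq]; exact hEvy
                · rw [hs₂'def, Function.update_of_ne hgiy, Function.update_self,
                    hsmdef, Function.update_of_ne hgiy]
                  exact hδs
                · rw [hs₂'def, Function.update_self, hsmdef, Function.update_self]
                  exact hrc
                · intro w hw1 hw2
                  rw [hs₂'def, Function.update_of_ne hw2, Function.update_of_ne hw1]
              have hmarked' : ∀ l, s₂' (g' l) = s₂ (g l) := by
                intro l
                rw [hs₂'def, Function.update_of_ne (hyunm l)]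
                by_cases hli : l = i
                · subst hli; rw [Function.update_self]
                · rw [Function.update_of_ne (fun hh => hli (hg' hh)), hsmdef,
                    Function.update_of_ne (hyunm l), hmarked l,
                    hoth (g l) (fun hh => hli (hg (hh.trans hi.symm))) (hu₂unm l)]
              have htoks' : P.tok (s₂' y) := by
                rw [hs₂'def, Function.update_self]
                exact (P.rcv_tok hrc).2
              have huniqs' : ∀ w, P.tok (s₂' w) → w = y := by
                intro w hw
                by_cases hwy : w = y
                · exact hwy
                · exfalso
                  rw [hs₂'def, Function.update_of_ne hwy] at hw
                  by_cases hwi : w = g' i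
                  · subst hwi
                    rw [Function.update_self] at hw
                    have : P.tok (s₂ u₁) := by rw [← hi]; exact hw
                    exact (P.snd_tok hsnd).2 this
                  · rw [Function.update_of_ne hwi, hsmdef, Function.update_of_ne hwy] at hw
                    exact hwi ((huniqG' w hw).trans hv'eq)
              obtain ⟨ρ'', hchr, hdr⟩ := ih htl' s₂ v₂ s₂' y wr₂ hch' hf' htoks₂ huniq2
                htoks' huniqs' hmarked' hwch.tail hlabs3
              refine ⟨seg₁ ++ s₂' :: ρ'', ?_, ?_⟩
              · have c1 := chain'_glue hch₁ hlast₁ (List.isChain_cons_cons.mpr ⟨hstep', hchr⟩)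
                simpa using c1
              · simp only [projTrace, List.map_cons, List.map_append] at hdr ⊢
                have ha : (fun l => s' (g' l)) = fun l => s (g l) := funext hmarked
                have hb : (fun l => s₂' (g' l)) = fun l => s₂ (g l) := funext hmarked'
                rw [dst_cons_stutter (fun b hb2 => ?_)]
                · rw [ha]
                  refine dst_congr_cons _ ?_ hdr
                  simp [hb]
                · obtain ⟨t, ht, rfl⟩ := List.mem_map.mp hb2
                  exact funext fun l => hstut₁ t ht (g' l) (hyunm l)
          · -- sender unmarked in G: route the token through unmarked walk vertices
            have hvunm : ∀ i, g i ≠ u₁ := fun i hh => hmv ⟨i, hh⟩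
            have hlabv : lab G g u₁ = ∅ := lab_of_unmarked G g hvunm
            have hv'unm : ∀ i, g' i ≠ v' := by
              intro i hh
              have h1 : lab G' g' v' = {i} := hh ▸ lab_of_marked G' g' hg' i
              rw [hheadlab, hlabv] at h1
              exact Finset.singleton_ne_empty i h1.symm
            have hmu₂ : ∃ j, g j = v₂ := by
              by_contra hno
              push_neg at hno
              exact hlvu ((lab_of_unmarked G g hno).trans hlabv.symm)
            obtain ⟨j, hj⟩ := hmu₂
            have hlabu₂ : lab G g v₂ = {j} := hj ▸ lab_of_marked G g hg j
            have hrecv0 : P.δ (s' (g' j)) Act.rcv (s₂ (g j)) := by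
              rw [hmarked j, hj]; exact hrcv
            have htar : dst ((v' :: y :: wr₂).map (lab G' g')) =
                (∅ : Finset (Fin k)) :: dst ((v₂ :: htl').map (lab G g)) := by
              rw [hlabs2, hlabv]
            have hM : (dst ((v₂ :: htl').map (lab G g))).head? = some {j} := by
              simp only [List.map_cons]
              rw [dst_head?, hlabu₂]
            obtain ⟨wr', seg, s₂'', hcw, hdw, hchseg, hstut, hgjq, hothm, huniqs''⟩ :=
              route P G' g' hg' j (s₂ (g j)) (y :: wr₂) v' s' _ hwch hv'unm hv' huniqG'
                hrecv0 htar hM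
            have hmarked' : ∀ l, s₂'' (g' l) = s₂ (g l) := by
              intro l
              by_cases hlj : l = j
              · subst hlj; exact hgjq
              · rw [hothm l hlj, hmarked l,
                  hoth (g l) (hvunm l) (fun hh => hlj (hg (hh.trans hj.symm)))]
            have htoks'' : P.tok (s₂'' (g' j)) := by
              rw [hmarked' j, hj]; exact htoks₂
            obtain ⟨ρ'', hchr, hdr⟩ := ih htl' s₂ v₂ s₂'' (g' j) wr' hch' hf' htoks₂ huniq2
              htoks'' huniqs'' hmarked' hcw hdw
            refine ⟨seg ++ s₂'' :: ρ'', ?_, ?_⟩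
            · have hlastseg : (s' :: seg ++ [s₂'']).getLast? = some s₂'' := by
                rw [show s' :: seg ++ [s₂''] = (s' :: seg) ++ [s₂''] by simp]
                exact List.getLast?_concat
              have c1 := chain'_glue hchseg hlastseg hchr
              rw [show (s' :: seg ++ [s₂'']) ++ ρ'' = s' :: (seg ++ s₂'' :: ρ'') by simp] at c1
              exact c1
            · simp only [projTrace, List.map_cons, List.map_append] at hdr ⊢
              have ha : (fun l => s' (g' l)) = fun l => s (g l) := funext hmarked
              have hb : (fun l => s₂'' (g' l)) = fun l => s₂ (g l) := funext hmarked'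
              rw [dst_cons_stutter (fun b hb2 => ?_)]
              · rw [ha]
                refine dst_congr_cons _ ?_ hdr
                simp [hb]
              · obtain ⟨t, ht, rfl⟩ := List.mem_map.mp hb2
                exact funext fun l => hstut t ht l

end Main

/-- lifting lemma, core of the Reduction Theorem: if a walk `w`
in `G'` from `x'` has the same destuttered label-sequence as the holder
itinerary `h` of a finite run `ρ` of `P^G`, then there is a finite run `ρ'` of
`P^{G'}` whose destuttered `ḡ'`-projection trace equals the destuttered
`ḡ`-projection trace of `ρ`. -/
theorem stmt15 {A : Type} [Fintype A] [Nonempty A] {k : ℕ}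
    (P : ProcTemplate A) (G G' : Topo) (x : G.V) (x' : G'.V)
    (g : Fin k → G.V) (hg : Function.Injective g)
    (g' : Fin k → G'.V) (hg' : Function.Injective g')
    (ρ : List (G.V → P.Q)) (hρ : IsFinRun P G x ρ)
    (h : List G.V) (hh : List.Forall₂ (fun s v => P.tok (s v)) ρ h)
    (w : List G'.V) (hw : IsWalkFrom G' x' w)
    (hlab : dst (w.map (lab G' g')) = dst (h.map (lab G g))) :
    ∃ ρ' : List (G'.V → P.Q), IsFinRun P G' x' ρ' ∧
      dst (projTrace P G' g' ρ') = dst (projTrace P G g ρ) := by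
  obtain ⟨hne, hhd, hch⟩ := hρ
  cases ρ with
  | nil => exact absurd rfl hne
  | cons s₀ tl =>
  have hs₀ : s₀ = gInit P G x := by simpa using hhd
  subst hs₀
  cases hh with
  | @cons _ h₀ _ htl h0tok hf =>
  obtain ⟨hwne, hwhd, hwch⟩ := hw
  cases w with
  | nil => exact absurd rfl hwne
  | cons w₀ wr =>
  have hw₀ : w₀ = x' := by simpa using hwhd
  subst w₀
  have hx : h₀ = x := by
    by_contra hne'
    have h1 : gInit P G x h₀ = P.iotaN := by simp [gInit, hne']
    rw [h1] at h0tok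
    exact P.not_tok_iotaN h0tok
  subst h₀
  have htokx : P.tok (gInit P G x x) := by
    simp only [gInit, if_pos rfl]
    exact P.tok_iotaT
  have huniqx : ∀ u, P.tok (gInit P G x u) → u = x := by
    intro u hu
    by_contra hne'
    simp only [gInit, if_neg hne'] at hu
    exact P.not_tok_iotaN hu
  have htokx' : P.tok (gInit P G' x' x') := by
    simp only [gInit, if_pos rfl]
    exact P.tok_iotaT
  have huniqx' : ∀ u, P.tok (gInit P G' x' u) → u = x' := by
    intro u hu
    by_contra hne'
    simp only [gInit, if_neg hne'] at hu
    exact P.not_tok_iotaN hu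
  have hlabx : lab G' g' x' = lab G g x := by
    have h1 : (dst ((x' :: wr).map (lab G' g'))).head? = some (lab G' g' x') := by
      simp only [List.map_cons]; exact dst_head? _ _
    have h2 : (dst ((x :: htl).map (lab G g))).head? = some (lab G g x) := by
      simp only [List.map_cons]; exact dst_head? _ _
    rw [hlab, h2] at h1
    exact (Option.some.inj h1).symm
  have hmarked : ∀ i, gInit P G' x' (g' i) = gInit P G x (g i) := by
    intro i
    by_cases hgi : g i = x
    · have hgi' : g' i = x' := by
        have h1 : lab G g x = {i} := hgi ▸ lab_of_marked G g hg i
        exact marked_of_lab_eq (hlabx.trans h1)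
      simp [gInit, hgi, hgi']
    · have hg'i : g' i ≠ x' := by
        intro hh'
        have h1 : lab G' g' x' = {i} := hh' ▸ lab_of_marked G' g' hg' i
        exact hgi (marked_of_lab_eq (hlabx.symm.trans h1))
      simp [gInit, hgi, hg'i]
  obtain ⟨ρ'', hchr, hdr⟩ := main_sim P G G' g hg g' hg' tl htl (gInit P G x) x
    (gInit P G' x') x' wr hch hf htokx huniqx htokx' huniqx' hmarked hwch hlab
  exact ⟨gInit P G' x' :: ρ'', ⟨List.cons_ne_nil _ _, rfl, hchr⟩, hdr⟩
end

section
/- Let P be a process template. For every local state q with ¬tok q there is a finite sequence q = q₀, q₁, …, q_r with (q_i, a_i, q_{i+1}) ∈ δ for some a_i ∈ Σint for each i < r, such that q_r has an outgoing rcv-transition, i.e., (q_r, rcv, q') ∈ δ for some q'. Dually, for every q with tok q there is such a finite sequence of internal transitions ending in a state with an outgoing snd-transition. -/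
/-- One internal step of the process template `P`. -/
def IntStep {A : Type} (P : ProcTemplate A) (q q' : P.Q) : Prop :=
  ∃ a, P.δ q (Act.int a) q'

lemma no_escape {A : Type} (P : ProcTemplate A) (S : P.Q → Prop) (q : P.Q)
    (hq : S q)
    (hstep : ∀ r, S r → ∃ a r', P.δ r (Act.int a) r' ∧ S r') : False := by
  classical
  have key : ∀ p : {r // S r}, ∃ (a : A) (p' : {r // S r}), P.δ p.1 (Act.int a) p'.1 := by
    rintro ⟨r, hr⟩
    obtain ⟨a, r', h, hS⟩ := hstep r hr
    exact ⟨a, ⟨r', hS⟩, h⟩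
  choose act nxt hδ using key
  let seq : ℕ → {r // S r} := fun n => Nat.rec ⟨q, hq⟩ (fun _ p => nxt p) n
  have := P.alternation (fun n => (seq n).1) (fun n => Act.int (act (seq n)))
    (fun n => hδ (seq n))
  obtain ⟨h1, -, -⟩ := this
  obtain ⟨t', -, h | h⟩ := h1 0 <;> cases h

lemma reach_list {A : Type} (P : ProcTemplate A) {q r : P.Q}
    (h : Relation.ReflTransGen (IntStep P) q r) :
    ∃ l : List P.Q, l.head? = some q ∧ List.Chain' (IntStep P) l ∧
      l.getLast? = some r := by
  induction h with
  | refl => exact ⟨[q], rfl, List.isChain_singleton q, rfl⟩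
  | @tail b c hab hbc ih =>
    obtain ⟨l, h1, h2, h3⟩ := ih
    refine ⟨l ++ [c], ?_, ?_, ?_⟩
    · cases l with
      | nil => simp at h1
      | cons x xs => simpa using h1
    · refine List.isChain_append.2 ⟨h2, List.isChain_singleton c, ?_⟩
      intro x hx y hy
      simp only [List.head?_cons, Option.mem_def, Option.some.injEq] at hy
      rw [h3] at hx
      simp only [Option.mem_def, Option.some.injEq] at hx
      subst hx; subst hy; exact hbc
    · simp

/-- from any tokenless state there is a finite sequence of
internal transitions to a state with an outgoing `rcv`-transition; dually, from
any token-holding state there is a finite sequence of internal transitions to a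
state with an outgoing `snd`-transition. -/
theorem stmt17 {A : Type} [Fintype A] [Nonempty A]
    (P : ProcTemplate A) (q : P.Q) :
    (¬ P.tok q → ∃ l : List P.Q, l.head? = some q ∧ List.Chain' (IntStep P) l ∧
      ∃ qr, l.getLast? = some qr ∧ ∃ q', P.δ qr Act.rcv q') ∧
    (P.tok q → ∃ l : List P.Q, l.head? = some q ∧ List.Chain' (IntStep P) l ∧
      ∃ qr, l.getLast? = some qr ∧ ∃ q', P.δ qr Act.snd q') := by
  constructor
  · intro htok
    by_contra hcon
    push_neg at hcon
    have hall : ∀ r, Relation.ReflTransGen (IntStep P) q r →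
        ¬ P.tok r ∧ ¬ ∃ q', P.δ r Act.rcv q' := by
      intro r hr
      constructor
      · clear hcon
        induction hr with
        | refl => exact htok
        | tail _ hbc ih =>
          obtain ⟨a, hd⟩ := hbc
          exact fun h => ih ((P.int_tok hd).mpr h)
      · rintro ⟨q', hq'⟩
        obtain ⟨l, h1, h2, h3⟩ := reach_list P hr
        exact hcon l h1 h2 r h3 q' hq'
    refine no_escape P (fun r => Relation.ReflTransGen (IntStep P) q r) q
      Relation.ReflTransGen.refl ?_
    intro r hr
    obtain ⟨σ, r', hd⟩ := P.total r
    obtain ⟨hntok, hnrcv⟩ := hall r hr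
    cases σ with
    | int a => exact ⟨a, r', hd, hr.tail ⟨a, hd⟩⟩
    | snd => exact absurd (P.snd_tok hd).1 hntok
    | rcv => exact absurd ⟨r', hd⟩ hnrcv
  · intro htok
    by_contra hcon
    push_neg at hcon
    have hall : ∀ r, Relation.ReflTransGen (IntStep P) q r →
        P.tok r ∧ ¬ ∃ q', P.δ r Act.snd q' := by
      intro r hr
      constructor
      · clear hcon
        induction hr with
        | refl => exact htok
        | tail _ hbc ih =>
          obtain ⟨a, hd⟩ := hbc
          exact (P.int_tok hd).mp ih
      · rintro ⟨q', hq'⟩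
        obtain ⟨l, h1, h2, h3⟩ := reach_list P hr
        exact hcon l h1 h2 r h3 q' hq'
    refine no_escape P (fun r => Relation.ReflTransGen (IntStep P) q r) q
      Relation.ReflTransGen.refl ?_
    intro r hr
    obtain ⟨σ, r', hd⟩ := P.total r
    obtain ⟨htok', hnsnd⟩ := hall r hr
    cases σ with
    | int a => exact ⟨a, r', hd, hr.tail ⟨a, hd⟩⟩
    | snd => exact absurd ⟨r', hd⟩ hnsnd
    | rcv => exact absurd htok' (P.rcv_tok hd).1
end

section
/- For every process template P and every topology G, every infinite run s₀ s₁ s₂ … of the token-passing system P^G contains infinitely many token-passing transitions; equivalently, for infinitely many t the token holder of s_{t+1} differs from the token holder of s_t. -/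
/-- every infinite run of `P^G` contains infinitely many
token-passing transitions; equivalently, for infinitely many `t` the token
holder of `s (t+1)` differs from the token holder of `s t`. -/
theorem stmt18 {A : Type} [Fintype A] [Nonempty A]
    (P : ProcTemplate A) (G : Topo) (x : G.V)
    (s : ℕ → G.V → P.Q) (h0 : s 0 = gInit P G x)
    (hstep : ∀ t, GStep P G (s t) (s (t + 1))) :
    (∀ T : ℕ, ∃ t, T ≤ t ∧ TokTrans P G (s t) (s (t + 1))) ∧
    (∀ T : ℕ, ∃ t, T ≤ t ∧ ∃ v w : G.V, v ≠ w ∧ P.tok (s t v) ∧ P.tok (s (t + 1) w)) := by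
  classical
  have key : ∀ T : ℕ, ∃ t, T ≤ t ∧ TokTrans P G (s t) (s (t + 1)) := by
    intro T
    by_contra hcon
    push_neg at hcon
    have hint : ∀ t : ℕ, ∃ vv aa, P.δ (s (T + t) vv) (Act.int aa) (s (T + t + 1) vv) ∧
        ∀ w, w ≠ vv → s (T + t + 1) w = s (T + t) w := by
      intro t
      rcases hstep (T + t) with h | h
      · exact h
      · exact absurd h (hcon (T + t) (Nat.le_add_right _ _))
    choose v a hδ hfix using hint
    obtain ⟨v₀, hv₀⟩ := Finite.exists_infinite_fiber v
    rw [Set.infinite_coe_iff] at hv₀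
    have hS : ∀ n : ℕ, ∃ m, n < m ∧ v m = v₀ := by
      intro n
      obtain ⟨m, hm, hlt⟩ := hv₀.exists_gt n
      exact ⟨m, hlt, hm⟩
    obtain ⟨N, hN0, hNsucc⟩ : ∃ N : ℕ → ℕ, N 0 = Nat.find (hS 0) ∧
        ∀ k, N (k + 1) = Nat.find (hS (N k)) :=
      ⟨fun k => Nat.rec (Nat.find (hS 0)) (fun _ prev => Nat.find (hS prev)) k,
        rfl, fun _ => rfl⟩
    have hNv : ∀ k, v (N k) = v₀ := by
      intro k
      cases k with
      | zero => rw [hN0]; exact (Nat.find_spec (hS 0)).2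
      | succ k => rw [hNsucc]; exact (Nat.find_spec (hS (N k))).2
    have hNlt : ∀ k, N k < N (k + 1) := by
      intro k; rw [hNsucc]; exact (Nat.find_spec (hS (N k))).1
    have hmin : ∀ k m, N k < m → m < N (k + 1) → v m ≠ v₀ := by
      intro k m h1 h2 hvv
      rw [hNsucc] at h2
      exact Nat.find_min (hS (N k)) h2 ⟨h1, hvv⟩
    have hconst : ∀ k m, N k < m → m ≤ N (k + 1) → s (T + m) v₀ = s (T + N k + 1) v₀ := by
      intro k m
      induction m with
      | zero => intro h _; omega
      | succ m ih =>
        intro h1 h2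
        rcases Nat.lt_or_ge (N k) m with hlt | hge
        · have hm2 : m < N (k + 1) := by omega
          have hne : v m ≠ v₀ := hmin k m hlt hm2
          have hfx := hfix m v₀ (Ne.symm hne)
          have : T + (m + 1) = T + m + 1 := rfl
          rw [this, hfx]
          exact ih hlt (le_of_lt hm2)
        · have : m = N k := by omega
          subst this
          rfl
    have hpath : ∀ k, P.δ ((fun k => s (T + N k) v₀) k)
        ((fun k => Act.int (a (N k))) k) ((fun k => s (T + N k) v₀) (k + 1)) := by
      intro k
      have hd := hδ (N k)
      rw [hNv k] at hd
      have hc : s (T + N (k + 1)) v₀ = s (T + N k + 1) v₀ :=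
        hconst k (N (k + 1)) (hNlt k) le_rfl
      show P.δ (s (T + N k) v₀) (Act.int (a (N k))) (s (T + N (k + 1)) v₀)
      rw [hc]; exact hd
    obtain ⟨t', -, ht'⟩ :=
      (P.alternation (fun k => s (T + N k) v₀) (fun k => Act.int (a (N k))) hpath).1 0
    rcases ht' with h | h <;> cases h
  refine ⟨key, fun T => ?_⟩
  obtain ⟨t, ht, vv, ww, hE, hsnd, hrcv, -⟩ := key T
  refine ⟨t, ht, vv, ww, ?_, (P.snd_tok hsnd).1, (P.rcv_tok hrcv).2⟩
  rintro rfl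
  exact G.no_self_loops vv hE
end
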